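/- If the true pair [A, B] satisfies X_+ = A X_− + B U_− + W_− for some noise matrix W_− whose columns lie in the zonotope Z_w, and the matrix [X_−; U_−] has full row rank n + m, then [A, B] belongs to the set (X_+ − M_w)·pinv([X_−; U_−]), where M_w is the matrix zonotope of all noise matrices with columns in Z_w and pinv denotes the right pseudo-inverse. -/

import Mathlib

open Matrix

/-- If X_+ = A X_− + B U_− + W_− with the columns of W_− in the zonotope
Z_w, and D = [X_−; U_−] has a right pseudo-inverse D† (D D† = I, guaranteed by the full
row rank condition), then [A, B] ∈ (X_+ − M_w)·D†, where M_w is the set of noise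
matrices with columns in Z_w. -/
theorem true_system_matrices_in_data_driven_set
    {n m T : ℕ} (A : Matrix (Fin n) (Fin n) ℝ) (B : Matrix (Fin n) (Fin m) ℝ)
    (Xm : Matrix (Fin n) (Fin T) ℝ) (Um : Matrix (Fin m) (Fin T) ℝ)
    (Xp Wm : Matrix (Fin n) (Fin T) ℝ) (Zw : Set (Fin n → ℝ))
    (hdata : Xp = A * Xm + B * Um + Wm)
    (hWcols : ∀ t : Fin T, (fun i => Wm i t) ∈ Zw)
    (Dp : Matrix (Fin T) (Fin n ⊕ Fin m) ℝ)
    (hrank : (fromRows Xm Um).rank = n + m)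
    (hpinv : fromRows Xm Um * Dp = 1) :
    fromCols A B ∈
      {M : Matrix (Fin n) (Fin n ⊕ Fin m) ℝ |
        ∃ W : Matrix (Fin n) (Fin T) ℝ,
          (∀ t : Fin T, (fun i => W i t) ∈ Zw) ∧ M = (Xp - W) * Dp} := by
  exact ⟨Wm, hWcols, by
    have : Xp - Wm = fromCols A B * fromRows Xm Um := by
      rw [hdata, fromCols_mul_fromRows]; abel
    rw [this, Matrix.mul_assoc, hpinv, Matrix.mul_one]⟩
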